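/- Let 2 ≤ r ≤ d and let U, U′ be d-dimensional subspaces of ℂ^n with dim(U ∩ V_{n−d}) ≤ r−2 and dim(U′ ∩ V_{n−d}) ≤ r−2. Let ω = u_1 ∧ ⋯ ∧ u_d and ω′ = u′_1 ∧ ⋯ ∧ u′_d for bases u of U and u′ of U′, and write ω = Σ_I c_I v_I, ω′ = Σ_I c′_I v_I in the basis {v_I}. If there exists a nonzero λ ∈ ℂ such that c_I = λ·c′_I for every d-element subset I with deg I ≤ r−1, then U = U′. -/

import Mathlib

/-- The `i`-th standard basis vector of `ℂ^n`. -/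
noncomputable def ee (n : ℕ) (i : Fin n) : Fin n → ℂ := Pi.single i 1

/-- The degree of a subset `I ⊆ {1,…,n}` (0-indexed: `deg I = #{i ∈ I : i ≥ d}`). -/
def degS (n d : ℕ) (I : Finset (Fin n)) : ℕ := (I.filter fun i : Fin n => d ≤ i.val).card

/-- The wedge basis vector `v_I = e_{i_1} ∧ ⋯ ∧ e_{i_d}` for `I = {i_1 < ⋯ < i_d}`. -/
noncomputable def vI (n d : ℕ) (I : Finset (Fin n)) (hI : I.card = d) :
    ExteriorAlgebra ℂ (Fin n → ℂ) :=
  ExteriorAlgebra.ιMulti ℂ d fun k => ee n (I.orderIsoOfFin hI k)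

/-- `V_{n-d}`: the span of the last `n - d` standard basis vectors. -/
noncomputable def Vhigh (n d : ℕ) : Submodule ℂ (Fin n → ℂ) :=
  Submodule.span ℂ {v | ∃ i : Fin n, d ≤ i.val ∧ v = ee n i}

open Finset Module Submodule Matrix

namespace Stmt6Aux

noncomputable def dmat (n : ℕ) {m : ℕ} (u : Fin m → (Fin n → ℂ)) (J : Finset (Fin n))
    (h : J.card = m) : ℂ :=
  Matrix.det (Matrix.of fun l k => u l (J.orderEmbOfFin h k))

noncomputable def Dform (n m : ℕ) (J : Finset (Fin n)) (h : J.card = m) :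
    (Fin n → ℂ) [⋀^Fin m]→ₗ[ℂ] ℂ :=
  (Matrix.detRowAlternating).compLinearMap (LinearMap.funLeft ℂ ℂ (J.orderEmbOfFin h))

lemma Dform_apply (n m : ℕ) (J : Finset (Fin n)) (h : J.card = m) (v : Fin m → (Fin n → ℂ)) :
    Dform n m J h v = dmat n v J h := rfl

noncomputable def phi (n : ℕ) (J : Finset (Fin n)) :
    ExteriorAlgebra ℂ (Fin n → ℂ) →ₗ[ℂ] ℂ :=
  ExteriorAlgebra.liftAlternating (fun i => if h : J.card = i then Dform n i J h else 0)

lemma phi_ιMulti (n : ℕ) {m : ℕ} (J : Finset (Fin n)) (hJ : J.card = m)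
    (v : Fin m → (Fin n → ℂ)) :
    phi n J (ExteriorAlgebra.ιMulti ℂ m v) = dmat n v J hJ := by
  rw [phi, ExteriorAlgebra.liftAlternating_apply_ιMulti, dif_pos hJ, Dform_apply]

lemma dmat_ee (n : ℕ) {m : ℕ} (I J : Finset (Fin n)) (hI : I.card = m) (hJ : J.card = m) :
    dmat n (fun k => ee n (I.orderIsoOfFin hI k)) J hJ = if I = J then 1 else 0 := by
  split_ifs with hIJ
  · subst hIJ
    rw [dmat]
    have : (Matrix.of fun l k => ee n (I.orderIsoOfFin hI l) (I.orderEmbOfFin hJ k)) =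
        (1 : Matrix (Fin m) (Fin m) ℂ) := by
      ext l k
      simp only [Matrix.of_apply, ee, Pi.single_apply, Matrix.one_apply]
      have : (I.orderEmbOfFin hJ k = (I.orderIsoOfFin hI l : Fin n)) ↔ l = k := by
        rw [Finset.coe_orderIsoOfFin_apply]
        constructor
        · intro h
          exact ((I.orderEmbOfFin hI).injective h).symm
        · rintro rfl; rfl
      simp [this, eq_comm]
    rw [this, Matrix.det_one]
  · -- find an element of I not in J
    have hne : (I \ J).Nonempty := by
      rw [Finset.sdiff_nonempty]
      intro hsub
      exact hIJ (Finset.eq_of_subset_of_card_le hsub (le_of_eq (hJ.trans hI.symm)))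
    obtain ⟨x, hx⟩ := hne
    rw [Finset.mem_sdiff] at hx
    obtain ⟨l0, hl0⟩ : ∃ l0, (I.orderIsoOfFin hI l0 : Fin n) = x :=
      ⟨(I.orderIsoOfFin hI).symm ⟨x, hx.1⟩, by simp⟩
    rw [dmat]
    apply Matrix.det_eq_zero_of_row_eq_zero l0
    intro k
    simp only [Matrix.of_apply, ee, Pi.single_apply]
    rw [if_neg]
    rw [hl0]
    intro h
    exact hx.2 (h ▸ J.orderEmbOfFin_mem hJ k)

lemma phi_vI (n d : ℕ) (I J : Finset (Fin n)) (hI : I.card = d) (hJ : J.card = d) :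
    phi n J (vI n d I hI) = if I = J then 1 else 0 := by
  rw [vI, phi_ιMulti n J hJ, dmat_ee]

/-- Extraction of coefficients: `c J` is a determinant. -/
lemma coeff_eq_dmat (n d : ℕ) (u : Fin d → (Fin n → ℂ))
    (c : {I : Finset (Fin n) // I.card = d} → ℂ)
    (hc : ExteriorAlgebra.ιMulti ℂ d u =
      ∑ I : {I : Finset (Fin n) // I.card = d}, c I • vI n d I.1 I.2)
    (J : Finset (Fin n)) (hJ : J.card = d) :
    c ⟨J, hJ⟩ = dmat n u J hJ := by
  have := congrArg (phi n J) hc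
  rw [phi_ιMulti n J hJ, map_sum] at this
  rw [this, Finset.sum_eq_single (⟨J, hJ⟩ : {I : Finset (Fin n) // I.card = d})
      (fun I _ hne => by
        rw [_root_.map_smul, phi_vI (hJ := hJ), if_neg (fun h => hne (Subtype.ext h)), smul_eq_mul, mul_zero])
      (fun h => absurd (Finset.mem_univ _) h),
    _root_.map_smul, phi_vI (hJ := hJ), if_pos rfl, smul_eq_mul, mul_one]

lemma erase_card {n m : ℕ} (J : Finset (Fin n)) (h : J.card = m + 1) {x : Fin n}
    (hx : x ∈ J) : (J.erase x).card = m := by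
  rw [Finset.card_erase_of_mem hx, h]
  omega

/-- The linear functional giving the coefficient of `v_J` in `v ∧ ω`. -/
noncomputable def ellF (n d : ℕ) (γ : {I : Finset (Fin n) // I.card = d} → ℂ)
    (J : Finset (Fin n)) (h : J.card = d + 1) : (Fin n → ℂ) →ₗ[ℂ] ℂ :=
  ∑ j : Fin (d + 1),
    ((-1 : ℂ) ^ (j : ℕ) *
        γ ⟨J.erase (J.orderEmbOfFin h j), erase_card J h (J.orderEmbOfFin_mem h j)⟩) •
      LinearMap.proj (R := ℂ) (φ := fun _ : Fin n => ℂ) (J.orderEmbOfFin h j)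

lemma ellF_apply (n d : ℕ) (γ : {I : Finset (Fin n) // I.card = d} → ℂ)
    (J : Finset (Fin n)) (h : J.card = d + 1) (v : Fin n → ℂ) :
    ellF n d γ J h v = ∑ j : Fin (d + 1),
      (-1 : ℂ) ^ (j : ℕ) *
        γ ⟨J.erase (J.orderEmbOfFin h j), erase_card J h (J.orderEmbOfFin_mem h j)⟩ *
        v (J.orderEmbOfFin h j) := by
  simp [ellF, mul_assoc]

lemma emb_succAbove {n d : ℕ} (J : Finset (Fin n)) (h : J.card = d + 1) (j : Fin (d + 1)) :
    (fun k => J.orderEmbOfFin h (j.succAbove k)) =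
      (J.erase (J.orderEmbOfFin h j)).orderEmbOfFin (erase_card J h (J.orderEmbOfFin_mem h j)) := by
  apply Finset.orderEmbOfFin_unique
  · intro k
    rw [Finset.mem_erase]
    exact ⟨fun hh => (j.succAbove_ne k) ((J.orderEmbOfFin h).injective hh),
      J.orderEmbOfFin_mem h _⟩
  · exact (J.orderEmbOfFin h).strictMono.comp (Fin.strictMono_succAbove j)

lemma det_cons {n d : ℕ} (u : Fin d → (Fin n → ℂ)) (v : Fin n → ℂ)
    (J : Finset (Fin n)) (h : J.card = d + 1) :
    Matrix.det (Matrix.of fun l k => (Fin.cons v u : Fin (d+1) → (Fin n → ℂ)) l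
        (J.orderEmbOfFin h k)) =
      ∑ j : Fin (d + 1), (-1 : ℂ) ^ (j : ℕ) * v (J.orderEmbOfFin h j) *
        dmat n u (J.erase (J.orderEmbOfFin h j)) (erase_card J h (J.orderEmbOfFin_mem h j)) := by
  rw [Matrix.det_succ_row_zero]
  refine Finset.sum_congr rfl fun j _ => ?_
  congr 1
  rw [dmat]
  congr 1
  ext l k
  simp only [Matrix.submatrix_apply, Matrix.of_apply, Fin.cons_succ]
  rw [← congrFun (emb_succAbove J h j) k]

lemma ellF_eq_det {n d : ℕ} (u : Fin d → (Fin n → ℂ))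
    (γ : {I : Finset (Fin n) // I.card = d} → ℂ)
    (hγ : ∀ I, γ I = dmat n u I.1 I.2)
    (J : Finset (Fin n)) (h : J.card = d + 1) (v : Fin n → ℂ) :
    ellF n d γ J h v =
      Matrix.det (Matrix.of fun l k => (Fin.cons v u : Fin (d+1) → (Fin n → ℂ)) l
        (J.orderEmbOfFin h k)) := by
  rw [det_cons, ellF_apply]
  refine Finset.sum_congr rfl fun j _ => ?_
  rw [hγ]
  ring

lemma ellF_zero_of_mem_span {n d : ℕ} (u : Fin d → (Fin n → ℂ))
    (γ : {I : Finset (Fin n) // I.card = d} → ℂ)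
    (hγ : ∀ I, γ I = dmat n u I.1 I.2)
    (J : Finset (Fin n)) (h : J.card = d + 1) (v : Fin n → ℂ)
    (hv : v ∈ Submodule.span ℂ (Set.range u)) :
    ellF n d γ J h v = 0 := by
  rw [ellF_eq_det u γ hγ J h v]
  obtain ⟨a, ha⟩ := (mem_span_range_iff_exists_fun ℂ).mp hv
  refine Matrix.exists_vecMul_eq_zero_iff.mp ⟨Fin.cons 1 (fun l => -a l), ?_, ?_⟩
  · intro hg
    have := congrFun hg 0
    simp at this
  · ext k
    have hk : (∑ l, a l • u l) (J.orderEmbOfFin h k) = v (J.orderEmbOfFin h k) := by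
      rw [ha]
    rw [Finset.sum_apply] at hk
    simp only [Matrix.vecMul, dotProduct, Matrix.of_apply, Pi.zero_apply]
    rw [Fin.sum_univ_succ]
    simp only [Fin.cons_zero, Fin.cons_succ, one_mul, neg_mul]
    rw [← hk]
    simp only [Pi.smul_apply, smul_eq_mul]
    rw [← Finset.sum_add_distrib]
    simp

lemma degS_mono {n d : ℕ} {I J : Finset (Fin n)} (h : I ⊆ J) : degS n d I ≤ degS n d J :=
  Finset.card_le_card (Finset.filter_subset_filter _ h)

lemma degS_insert {n d : ℕ} (j : Fin n) (I : Finset (Fin n)) :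
    degS n d (insert j I) ≤ degS n d I + 1 := by
  classical
  rw [degS, Finset.filter_insert]
  split_ifs
  · exact (Finset.card_insert_le _ _).trans (by rfl)
  · exact Nat.le_succ _

lemma insert_card {n d : ℕ} {I0 : Finset (Fin n)} (hI0card : I0.card = d) {j : Fin n}
    (hj : j ∉ I0) : (insert j I0).card = d + 1 := by
  rw [Finset.card_insert_of_notMem hj, hI0card]

lemma span_eq_ker (n d : ℕ) (I0 : Finset (Fin n)) (hI0card : I0.card = d)
    (u : Fin d → (Fin n → ℂ)) (γ : {I : Finset (Fin n) // I.card = d} → ℂ)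
    (hγ : ∀ I, γ I = dmat n u I.1 I.2) (hli : LinearIndependent ℂ u)
    (hI0 : γ ⟨I0, hI0card⟩ ≠ 0) :
    Submodule.span ℂ (Set.range u) =
      ⨅ (j : Fin n) (hj : j ∉ I0),
        LinearMap.ker (ellF n d γ (insert j I0) (insert_card hI0card hj)) := by
  set W := ⨅ (j : Fin n) (hj : j ∉ I0),
        LinearMap.ker (ellF n d γ (insert j I0) (insert_card hI0card hj)) with hW
  have hle : Submodule.span ℂ (Set.range u) ≤ W := by
    refine le_iInf fun j => le_iInf fun hj => ?_
    intro v hv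
    rw [LinearMap.mem_ker]
    exact ellF_zero_of_mem_span u γ hγ _ _ v hv
  -- injectivity of the restriction of coordinates to I0 on W
  have hinj : ∀ v ∈ W, (∀ i ∈ I0, v i = 0) → v = 0 := by
    intro v hvW hv0
    funext j
    by_cases hj : j ∈ I0
    · exact hv0 j hj
    · have hvk : ellF n d γ (insert j I0) (insert_card hI0card hj) v = 0 := by
        have := hvW
        rw [hW, Submodule.mem_iInf] at this
        have := this j
        rw [Submodule.mem_iInf] at this
        exact this hj
      rw [ellF_apply] at hvk
      set J := insert j I0 with hJ
      set h : J.card = d + 1 := insert_card hI0card hj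
      obtain ⟨jj0, hjj0⟩ : ∃ jj0, J.orderEmbOfFin h jj0 = j := by
        have : j ∈ J := Finset.mem_insert_self j I0
        have hmem := (Finset.range_orderEmbOfFin J h)
        have : j ∈ Set.range (J.orderEmbOfFin h) := by rw [hmem]; simpa using this
        obtain ⟨jj0, hjj0⟩ := this
        exact ⟨jj0, hjj0⟩
      rw [Finset.sum_eq_single jj0] at hvk
      · have hγeq : γ ⟨J.erase (J.orderEmbOfFin h jj0),
            erase_card J h (J.orderEmbOfFin_mem h jj0)⟩ = γ ⟨I0, hI0card⟩ := by
          refine congrArg γ (Subtype.ext ?_)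
          show J.erase (J.orderEmbOfFin h jj0) = I0
          rw [hjj0]
          exact Finset.erase_insert hj
        rw [hγeq, hjj0] at hvk
        rcases mul_eq_zero.mp hvk with h1 | h2
        · exact absurd h1 (mul_ne_zero (pow_ne_zero _ (by norm_num)) hI0)
        · exact h2
      · intro jj _ hne
        have : J.orderEmbOfFin h jj ∈ I0 := by
          have hmem : J.orderEmbOfFin h jj = j ∨ J.orderEmbOfFin h jj ∈ I0 :=
            Finset.mem_insert.mp (J.orderEmbOfFin_mem h jj)
          rcases hmem with h1 | h1
          · exact absurd ((J.orderEmbOfFin h).injective (h1.trans hjj0.symm)) hne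
          · exact h1
        rw [hv0 _ this, mul_zero]
      · intro habs
        exact absurd (Finset.mem_univ _) habs
  -- dimension bound
  have hdim : Module.finrank ℂ W ≤ d := by
    let Φ : W →ₗ[ℂ] ({x // x ∈ I0} → ℂ) :=
      (LinearMap.pi fun i : {x // x ∈ I0} =>
        LinearMap.proj (R := ℂ) (φ := fun _ : Fin n => ℂ) i.1) ∘ₗ W.subtype
    have hΦ : Function.Injective Φ := by
      rw [← LinearMap.ker_eq_bot]
      rw [Submodule.eq_bot_iff]
      rintro ⟨v, hv⟩ hker
      rw [LinearMap.mem_ker] at hker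
      have : ∀ i ∈ I0, v i = 0 := fun i hi => congrFun hker ⟨i, hi⟩
      exact Subtype.ext (hinj v hv this)
    calc Module.finrank ℂ W ≤ Module.finrank ℂ ({x // x ∈ I0} → ℂ) :=
          LinearMap.finrank_le_finrank_of_injective hΦ
      _ = d := by rw [Module.finrank_pi, Fintype.card_coe, hI0card]
  have hsp : Module.finrank ℂ (Submodule.span ℂ (Set.range u)) = d := by
    rw [finrank_span_eq_card hli, Fintype.card_fin]
  exact Submodule.eq_of_le_of_finrank_le hle (by rw [hsp]; exact hdim)

lemma Vhigh_eq_ker (n d : ℕ) (hdn : d ≤ n) :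
    Vhigh n d = LinearMap.ker (LinearMap.funLeft ℂ ℂ (Fin.castLE hdn)) := by
  apply le_antisymm
  · rw [Vhigh, Submodule.span_le]
    rintro v ⟨i, hi, rfl⟩
    rw [SetLike.mem_coe, LinearMap.mem_ker]
    ext k
    simp only [LinearMap.funLeft_apply, ee, Pi.single_apply, Pi.zero_apply]
    rw [if_neg]
    intro hik
    have h1 : (Fin.castLE hdn k : ℕ) < d := k.isLt
    have h2 := congrArg Fin.val hik
    simp only [Fin.coe_castLE] at h2
    omega
  · intro v hv
    rw [LinearMap.mem_ker] at hv
    have hrep : v = ∑ i : Fin n, v i • ee n i := by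
      ext j
      rw [Finset.sum_apply]
      simp [ee, Pi.single_apply]
    rw [hrep]
    apply Submodule.sum_mem
    intro i _
    by_cases hi : d ≤ i.val
    · exact Submodule.smul_mem _ _ (Submodule.subset_span ⟨i, hi, rfl⟩)
    · have h0 := congrFun hv ⟨i.val, lt_of_not_ge hi⟩
      simp only [LinearMap.funLeft_apply, Pi.zero_apply] at h0
      have hce : Fin.castLE hdn ⟨i.val, lt_of_not_ge hi⟩ = i := Fin.ext rfl
      rw [hce] at h0
      rw [h0, zero_smul]
      exact Submodule.zero_mem _

lemma exists_I0 (n d r2 : ℕ) (hdn : d ≤ n) (hn : 0 < n)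
    (u : Fin d → (Fin n → ℂ)) (hli : LinearIndependent ℂ u)
    (hdim : Module.finrank ℂ ↥(Submodule.span ℂ (Set.range u) ⊓ Vhigh n d) ≤ r2) :
    ∃ (I0 : Finset (Fin n)) (hI0 : I0.card = d),
      degS n d I0 ≤ r2 ∧ dmat n u I0 hI0 ≠ 0 := by
  classical
  haveI : Inhabited (Fin n) := ⟨⟨0, hn⟩⟩
  set R : Fin n → (Fin d → ℂ) := fun i l => u l i with hRdef
  have hfinℂd : Module.finrank ℂ (Fin d → ℂ) = d := by
    rw [Module.finrank_pi, Fintype.card_fin]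
  -- the rows span everything
  have hrankA : Module.finrank ℂ (Submodule.span ℂ (Set.range R)) = d := by
    let A : Matrix (Fin n) (Fin d) ℂ := Matrix.of R
    have h1 : A.rank = Module.finrank ℂ (Submodule.span ℂ (Set.range Aᵀ)) :=
      A.rank_eq_finrank_span_cols
    have h2 : Aᵀ.rank = Module.finrank ℂ (Submodule.span ℂ (Set.range Aᵀᵀ)) :=
      Aᵀ.rank_eq_finrank_span_cols
    have h3 : Aᵀ.rank = A.rank := A.rank_transpose
    have h4 : Set.range Aᵀ = Set.range u := by
      congr 1
    have h5 : Set.range Aᵀᵀ = Set.range R := by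
      congr 1
    rw [h4] at h1
    rw [h5] at h2
    rw [← h2, h3, h1, finrank_span_eq_card hli, Fintype.card_fin]
  have hspanR : Submodule.span ℂ (Set.range R) = ⊤ := by
    apply Submodule.eq_top_of_finrank_eq
    rw [hrankA, hfinℂd]
  -- low rows
  set lows : Set (Fin n) := {i | (i : ℕ) < d} with hlowsdef
  have hlowdim : d - r2 ≤ Module.finrank ℂ (Submodule.span ℂ (R '' lows)) := by
    set plow : (Fin n → ℂ) →ₗ[ℂ] (Fin d → ℂ) := LinearMap.funLeft ℂ ℂ (Fin.castLE hdn)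
      with hplowdef
    set S : Submodule ℂ (Fin n → ℂ) := Submodule.span ℂ (Set.range u) with hSdef
    have hSfr : Module.finrank ℂ S = d := by
      rw [hSdef, finrank_span_eq_card hli, Fintype.card_fin]
    let C : Matrix (Fin d) (Fin d) ℂ := Matrix.of fun k l => u l (Fin.castLE hdn k)
    have h1 : C.rank = Module.finrank ℂ (Submodule.span ℂ (Set.range Cᵀ)) :=
      C.rank_eq_finrank_span_cols
    have h2 : Cᵀ.rank = Module.finrank ℂ (Submodule.span ℂ (Set.range Cᵀᵀ)) :=
      Cᵀ.rank_eq_finrank_span_cols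
    have h3 : Cᵀ.rank = C.rank := C.rank_transpose
    have h4 : Set.range Cᵀ = plow '' (Set.range u) := by
      rw [← Set.range_comp]
      congr 1
    -- identify span (R '' lows) with span of range C
    have hlowrange : R '' lows = Set.range C := by
      ext x
      constructor
      · rintro ⟨i, hi, rfl⟩
        refine ⟨⟨(i : ℕ), hi⟩, ?_⟩
        have : Fin.castLE hdn ⟨(i : ℕ), hi⟩ = i := Fin.ext rfl
        show (fun l => u l (Fin.castLE hdn ⟨(i : ℕ), hi⟩)) = R i
        rw [this]
      · rintro ⟨k, rfl⟩
        exact ⟨Fin.castLE hdn k, k.isLt, rfl⟩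
    -- rank-nullity
    let f : S →ₗ[ℂ] (Fin d → ℂ) := plow ∘ₗ S.subtype
    have hker : Module.finrank ℂ (LinearMap.ker f) =
        Module.finrank ℂ ↥(S ⊓ Vhigh n d) := by
      have hk1 : LinearMap.ker f = Submodule.comap S.subtype (S ⊓ LinearMap.ker plow) := by
        show LinearMap.ker (plow ∘ₗ S.subtype) = _
        rw [LinearMap.ker_comp, Submodule.comap_inf, Submodule.comap_subtype_self, top_inf_eq]
      rw [hk1, Vhigh_eq_ker n d hdn]
      exact LinearEquiv.finrank_eq (Submodule.comapSubtypeEquivOfLe inf_le_left)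
    have hrange : LinearMap.range f = Submodule.map plow S := by
      show LinearMap.range (plow ∘ₗ S.subtype) = _
      rw [LinearMap.range_comp, Submodule.range_subtype]
    have hrn := LinearMap.finrank_range_add_finrank_ker f
    rw [hrange, hker, hSfr] at hrn
    have hmap : d - r2 ≤ Module.finrank ℂ (Submodule.map plow S) := by
      omega
    have h6 : Submodule.span ℂ (plow '' (Set.range u)) = Submodule.map plow S := by
      rw [hSdef, Submodule.span_image]
    rw [hlowrange]
    have h7 : Module.finrank ℂ (Submodule.span ℂ (Set.range C)) = Cᵀ.rank := by
      rw [h2]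
      congr 2
    rw [h7, h3, h1, h4, h6]
    exact hmap
  -- choose independent sets
  obtain ⟨b0, hb0sub, hb0span, hb0li⟩ := exists_linearIndependent ℂ (R '' lows)
  have hb0R : b0 ⊆ Set.range R := hb0sub.trans (Set.image_subset_range _ _)
  obtain ⟨B, hBsub, hb0B, hBspan, hBli⟩ := exists_linearIndepOn_id_extension hb0li hb0R
  have hBspan' : Submodule.span ℂ B = ⊤ := by
    rw [eq_top_iff, ← hspanR]
    exact Submodule.span_le.mpr hBspan
  have hBfin : B.Finite := (Set.finite_range R).subset hBsub
  have hb0fin : b0.Finite := hBfin.subset hb0B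
  haveI := hBfin.fintype
  haveI := hb0fin.fintype
  have hBcard : B.toFinset.card = d := by
    have h := finrank_span_set_eq_card hBli
    rw [hBspan', finrank_top, hfinℂd] at h
    omega
  have hb0card : d - r2 ≤ b0.toFinset.card := by
    have h := finrank_span_set_eq_card hb0li
    rw [hb0span] at h
    omega
  have hb0Bfin : b0.toFinset ⊆ B.toFinset := by
    intro x hx
    exact Set.mem_toFinset.mpr (hb0B (Set.mem_toFinset.mp hx))
  -- elements of B outside b0 are not in the span of b0
  have hnotspan : ∀ x ∈ B, x ∉ b0 → x ∉ Submodule.span ℂ b0 := by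
    intro x hxB hxb0 hxs
    set s : Set ↥B := {y : ↥B | (y : Fin d → ℂ) ∈ b0} with hsdef
    have himg : (fun y : ↥B => (y : Fin d → ℂ)) '' s = b0 := by
      ext z
      constructor
      · rintro ⟨y, hy, rfl⟩
        exact hy
      · intro hz
        exact ⟨⟨z, hb0B hz⟩, hz, rfl⟩
    have h : ((⟨x, hxB⟩ : ↥B) : Fin d → ℂ) ∉ Submodule.span ℂ ((fun y : ↥B => (y : Fin d → ℂ)) '' s) :=
      hBli.linearIndependent.notMem_span_image (s := s) (x := ⟨x, hxB⟩) (by exact hxb0)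
    rw [himg] at h
    exact h hxs
  -- the picking function
  have hex : ∀ x ∈ B, ∃ i : Fin n,
      R i = x ∧ (x ∈ b0 → (i : ℕ) < d) ∧ (x ∉ b0 → d ≤ (i : ℕ)) := by
    intro x hxB
    by_cases hxb : x ∈ b0
    · obtain ⟨i, hi, hri⟩ := hb0sub hxb
      exact ⟨i, hri, fun _ => hi, fun h => absurd hxb h⟩
    · obtain ⟨i, hri⟩ := hBsub hxB
      by_cases hid : d ≤ (i : ℕ)
      · exact ⟨i, hri, fun h => absurd h hxb, fun _ => hid⟩
      · exfalso
        apply hnotspan x hxB hxb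
        rw [hb0span]
        exact Submodule.subset_span ⟨i, by simp only [hlowsdef, Set.mem_setOf_eq]; omega, hri⟩
  choose! pick hp1 hp2 hp3 using hex
  set I0 : Finset (Fin n) := B.toFinset.image pick with hI0def
  have hpinj : Set.InjOn pick B.toFinset := by
    intro x hx y hy h
    rw [← hp1 x (Set.mem_toFinset.mp hx), ← hp1 y (Set.mem_toFinset.mp hy), h]
  have hI0card : I0.card = d := by
    rw [hI0def, Finset.card_image_of_injOn hpinj, hBcard]
  have hRmem : ∀ i ∈ I0, R i ∈ B := by
    intro i hi
    obtain ⟨x, hx, rfl⟩ := Finset.mem_image.mp hi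
    rw [hp1 x (Set.mem_toFinset.mp hx)]
    exact Set.mem_toFinset.mp hx
  have hdeg : degS n d I0 ≤ r2 := by
    have hsubset : I0.filter (fun i : Fin n => d ≤ (i : ℕ)) ⊆
        (B.toFinset \ b0.toFinset).image pick := by
      intro i hi
      rw [Finset.mem_filter] at hi
      obtain ⟨x, hx, rfl⟩ := Finset.mem_image.mp hi.1
      refine Finset.mem_image.mpr ⟨x, ?_, rfl⟩
      rw [Finset.mem_sdiff]
      refine ⟨hx, fun hxb0 => ?_⟩
      have := hp2 x (Set.mem_toFinset.mp hx) (Set.mem_toFinset.mp hxb0)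
      have h2 := hi.2
      omega
    have h1 : degS n d I0 ≤ ((B.toFinset \ b0.toFinset).image pick).card :=
      Finset.card_le_card hsubset
    have h2 : ((B.toFinset \ b0.toFinset).image pick).card ≤
        (B.toFinset \ b0.toFinset).card := Finset.card_image_le
    have h3 : (B.toFinset \ b0.toFinset).card = B.toFinset.card - b0.toFinset.card :=
      Finset.card_sdiff_of_subset hb0Bfin
    omega
  refine ⟨I0, hI0card, hdeg, ?_⟩
  rw [dmat]
  set M : Matrix (Fin d) (Fin d) ℂ :=
    Matrix.of fun l k => u l (I0.orderEmbOfFin hI0card k) with hMdef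
  have hg : ∀ k : Fin d, R (I0.orderEmbOfFin hI0card k) ∈ B :=
    fun k => hRmem _ (I0.orderEmbOfFin_mem hI0card k)
  have hcols : LinearIndependent ℂ (fun k => Mᵀ k) := by
    have heq : (fun k => Mᵀ k) = (fun y : ↥B => (y : Fin d → ℂ)) ∘
        (fun k => (⟨R (I0.orderEmbOfFin hI0card k), hg k⟩ : ↥B)) := rfl
    rw [heq]
    apply hBli.comp
    intro k k' h
    have h2 : R (I0.orderEmbOfFin hI0card k) = R (I0.orderEmbOfFin hI0card k') :=
      congrArg Subtype.val h
    obtain ⟨x, hx, hxe⟩ := Finset.mem_image.mp (I0.orderEmbOfFin_mem hI0card k)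
    obtain ⟨y, hy, hye⟩ := Finset.mem_image.mp (I0.orderEmbOfFin_mem hI0card k')
    have hxv : R (pick x) = x := hp1 x (Set.mem_toFinset.mp hx)
    have hyv : R (pick y) = y := hp1 y (Set.mem_toFinset.mp hy)
    rw [← hxe, ← hye, hxv, hyv] at h2
    exact (I0.orderEmbOfFin hI0card).injective (by rw [← hxe, ← hye, h2])
  have hunit : IsUnit M := Matrix.linearIndependent_cols_iff_isUnit.mp hcols
  exact (Matrix.isUnit_iff_isUnit_det M).mp hunit |>.ne_zero

end Stmt6Aux

theorem stmt6 (n d r : ℕ) (hd1 : 1 ≤ d) (hdn : d ≤ n - d) (hr2 : 2 ≤ r) (hrd : r ≤ d)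
    (U U' : Submodule ℂ (Fin n → ℂ))
    (hU : Module.finrank ℂ U = d) (hU' : Module.finrank ℂ U' = d)
    (hUV : Module.finrank ℂ ↥(U ⊓ Vhigh n d) ≤ r - 2)
    (hUV' : Module.finrank ℂ ↥(U' ⊓ Vhigh n d) ≤ r - 2)
    (u u' : Fin d → (Fin n → ℂ))
    (hmem : ∀ k, u k ∈ U) (hli : LinearIndependent ℂ u)
    (hmem' : ∀ k, u' k ∈ U') (hli' : LinearIndependent ℂ u')
    (c c' : {I : Finset (Fin n) // I.card = d} → ℂ)
    (hc : ExteriorAlgebra.ιMulti ℂ d u =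
      ∑ I : {I : Finset (Fin n) // I.card = d}, c I • vI n d I.1 I.2)
    (hc' : ExteriorAlgebra.ιMulti ℂ d u' =
      ∑ I : {I : Finset (Fin n) // I.card = d}, c' I • vI n d I.1 I.2)
    (hprop : ∃ lam : ℂ, lam ≠ 0 ∧ ∀ I : {I : Finset (Fin n) // I.card = d},
      degS n d I.1 ≤ r - 1 → c I = lam * c' I) :
    U = U' := by
  classical
  obtain ⟨lam, hlam, hpr⟩ := hprop
  have hdn' : d ≤ n := le_trans hdn (Nat.sub_le n d)
  have hn : 0 < n := lt_of_lt_of_le hd1 hdn'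
  have hspanU : Submodule.span ℂ (Set.range u) = U := by
    apply Submodule.eq_of_le_of_finrank_le
      (Submodule.span_le.mpr (Set.range_subset_iff.mpr hmem))
    rw [hU, finrank_span_eq_card hli, Fintype.card_fin]
  have hspanU' : Submodule.span ℂ (Set.range u') = U' := by
    apply Submodule.eq_of_le_of_finrank_le
      (Submodule.span_le.mpr (Set.range_subset_iff.mpr hmem'))
    rw [hU', finrank_span_eq_card hli', Fintype.card_fin]
  obtain ⟨I0, hI0card, hI0deg, hI0ne⟩ :=
    Stmt6Aux.exists_I0 n d (r - 2) hdn' hn u hli (by rw [hspanU]; exact hUV)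
  have hγ : ∀ I : {I : Finset (Fin n) // I.card = d}, c I = Stmt6Aux.dmat n u I.1 I.2 :=
    fun I => Stmt6Aux.coeff_eq_dmat n d u c hc I.1 I.2
  have hγ' : ∀ I : {I : Finset (Fin n) // I.card = d}, c' I = Stmt6Aux.dmat n u' I.1 I.2 :=
    fun I => Stmt6Aux.coeff_eq_dmat n d u' c' hc' I.1 I.2
  have hcI0 : c ⟨I0, hI0card⟩ ≠ 0 := by rw [hγ]; exact hI0ne
  have hc'I0 : c' ⟨I0, hI0card⟩ ≠ 0 := by
    intro h0
    apply hcI0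
    rw [hpr ⟨I0, hI0card⟩ (le_trans hI0deg (by omega)), h0, mul_zero]
  have hWU := Stmt6Aux.span_eq_ker n d I0 hI0card u c hγ hli hcI0
  have hWU' := Stmt6Aux.span_eq_ker n d I0 hI0card u' c' hγ' hli' hc'I0
  have hkereq : ∀ (j : Fin n) (hj : j ∉ I0),
      LinearMap.ker (Stmt6Aux.ellF n d c (insert j I0) (Stmt6Aux.insert_card hI0card hj)) =
      LinearMap.ker (Stmt6Aux.ellF n d c' (insert j I0) (Stmt6Aux.insert_card hI0card hj)) := by
    intro j hj
    have hmapeq : Stmt6Aux.ellF n d c (insert j I0) (Stmt6Aux.insert_card hI0card hj) =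
        lam • Stmt6Aux.ellF n d c' (insert j I0) (Stmt6Aux.insert_card hI0card hj) := by
      rw [Stmt6Aux.ellF, Stmt6Aux.ellF, Finset.smul_sum]
      refine Finset.sum_congr rfl fun jj _ => ?_
      rw [smul_smul]
      congr 1
      have hdb : degS n d ((insert j I0).erase
          ((insert j I0).orderEmbOfFin (Stmt6Aux.insert_card hI0card hj) jj)) ≤ r - 1 := by
        have h1 := Stmt6Aux.degS_mono (n := n) (d := d)
          (Finset.erase_subset ((insert j I0).orderEmbOfFin (Stmt6Aux.insert_card hI0card hj) jj)
            (insert j I0))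
        have h2 := Stmt6Aux.degS_insert (n := n) (d := d) j I0
        omega
      rw [hpr _ hdb]
      ring
    ext v
    rw [LinearMap.mem_ker, LinearMap.mem_ker, hmapeq]
    simp [hlam]
  rw [← hspanU, ← hspanU', hWU, hWU']
  exact iInf_congr fun j => iInf_congr fun hj => hkereq j hj
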